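/- Let B → K and C → K be ring homomorphisms with C → K surjective, A = B ×_K C, and let A → A' be a flat ring homomorphism. Then the natural map A' → (B ⊗_A A') ×_{K ⊗_A A'} (C ⊗_A A') is an isomorphism, i.e., the base-changed diagram is again a fiber product diagram with C ⊗_A A' → K ⊗_A A' surjective. -/

import Mathlib

open TensorProduct

/-- Flat base change of a Ferrand fiber product diagram is again a fiber
product diagram, with `C ⊗_A A' → K ⊗_A A'` surjective. -/
theorem ferrand_flat_base_change
    (A B C K : Type*) [CommRing A] [CommRing B] [CommRing C] [CommRing K]
    [Algebra A B] [Algebra A C] [Algebra A K] [Algebra B K] [Algebra C K]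
    [IsScalarTower A B K] [IsScalarTower A C K]
    (hsurj : Function.Surjective (algebraMap C K))
    (hpull : ∀ (b : B) (c : C), algebraMap B K b = algebraMap C K c →
      ∃! a : A, algebraMap A B a = b ∧ algebraMap A C a = c)
    (A' : Type*) [CommRing A'] [Algebra A A'] [Module.Flat A A'] :
    Function.Surjective
        (Algebra.TensorProduct.map (IsScalarTower.toAlgHom A C K) (AlgHom.id A A') :
          C ⊗[A] A' →ₐ[A] K ⊗[A] A') ∧
      ∀ (x : B ⊗[A] A') (y : C ⊗[A] A'),
        Algebra.TensorProduct.map (IsScalarTower.toAlgHom A B K) (AlgHom.id A A') x =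
          Algebra.TensorProduct.map (IsScalarTower.toAlgHom A C K) (AlgHom.id A A') y →
        ∃! a' : A', (1 : B) ⊗ₜ[A] a' = x ∧ (1 : C) ⊗ₜ[A] a' = y := by
  constructor
  · -- surjectivity
    intro z
    induction z using TensorProduct.induction_on with
    | zero => exact ⟨0, map_zero _⟩
    | tmul k a' =>
      obtain ⟨c, hc⟩ := hsurj k
      exact ⟨c ⊗ₜ a', by simp [hc]⟩
    | add u v hu hv =>
      obtain ⟨u', hu'⟩ := hu
      obtain ⟨v', hv'⟩ := hv
      exact ⟨u' + v', by simp [hu', hv']⟩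
  · -- fiber product property after base change
    -- set up the exact sequence 0 → A → B × C → K
    set f : A →ₗ[A] B × C :=
      (Algebra.linearMap A B).prod (Algebra.linearMap A C) with hf
    set g : (B × C) →ₗ[A] K :=
      ((IsScalarTower.toAlgHom A B K).toLinearMap ∘ₗ LinearMap.fst A B C) -
      ((IsScalarTower.toAlgHom A C K).toLinearMap ∘ₗ LinearMap.snd A B C) with hg
    have hfinj : Function.Injective f := by
      intro a₁ a₂ h
      have h1 : algebraMap A B a₁ = algebraMap A B a₂ := congrArg Prod.fst h
      have h2 : algebraMap A C a₁ = algebraMap A C a₂ := congrArg Prod.snd h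
      obtain ⟨a, ⟨_, _⟩, huniq⟩ := hpull (algebraMap A B a₁) (algebraMap A C a₁)
        (by rw [← IsScalarTower.algebraMap_apply, ← IsScalarTower.algebraMap_apply])
      have e1 := huniq a₁ ⟨rfl, rfl⟩
      have e2 := huniq a₂ ⟨h1.symm, h2.symm⟩
      rw [e1, e2]
    have hexact : Function.Exact f g := by
      intro bc
      constructor
      · intro h0
        have : algebraMap B K bc.1 = algebraMap C K bc.2 := by
          have := sub_eq_zero.mp (by simpa [hg] using h0)
          simpa using this
        obtain ⟨a, ⟨ha1, ha2⟩, _⟩ := hpull bc.1 bc.2 this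
        exact ⟨a, by simp [hf, ha1, ha2]⟩
      · rintro ⟨a, rfl⟩
        simp [hf, hg, ← IsScalarTower.algebraMap_apply]
    -- tensor with A'
    have hf'inj : Function.Injective (f.rTensor A') :=
      Module.Flat.rTensor_preserves_injective_linearMap f hfinj
    have hexact' : Function.Exact (f.rTensor A') (g.rTensor A') :=
      Module.Flat.rTensor_exact A' hexact
    set e1 : A ⊗[A] A' ≃ₗ[A] A' := TensorProduct.lid A A' with he1
    set e2 : (B × C) ⊗[A] A' ≃ₗ[A] (B ⊗[A] A') × (C ⊗[A] A') :=
      TensorProduct.prodLeft A A B C A' with he2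
    -- h : A' → (B ⊗ A') × (C ⊗ A')
    set h : A' →ₗ[A] (B ⊗[A] A') × (C ⊗[A] A') :=
      e2.toLinearMap ∘ₗ (f.rTensor A') ∘ₗ e1.symm.toLinearMap with hh
    have hval : ∀ a' : A', h a' = ((1 : B) ⊗ₜ[A] a', (1 : C) ⊗ₜ[A] a') := by
      intro a'
      show e2 (f.rTensor A' (e1.symm a')) = _
      rw [he1, TensorProduct.lid_symm_apply, LinearMap.rTensor_tmul]
      rw [show f 1 = (((1 : B), (1 : C)) : B × C) by simp [hf], he2,
        TensorProduct.prodLeft_tmul]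
    have hhinj : Function.Injective h := by
      simp only [hh, LinearMap.coe_comp, LinearEquiv.coe_coe]
      exact e2.injective.comp (hf'inj.comp e1.symm.injective)
    -- relate g.rTensor to the algebra maps
    set Φ := (Algebra.TensorProduct.map (IsScalarTower.toAlgHom A B K) (AlgHom.id A A') :
      B ⊗[A] A' →ₐ[A] K ⊗[A] A') with hΦ
    set Ψ := (Algebra.TensorProduct.map (IsScalarTower.toAlgHom A C K) (AlgHom.id A A') :
      C ⊗[A] A' →ₐ[A] K ⊗[A] A') with hΨ
    have lemA : ∀ x : B ⊗[A] A', (g.rTensor A') (e2.symm (x, 0)) = Φ x := by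
      intro x
      induction x using TensorProduct.induction_on with
      | zero =>
        rw [show ((0 : B ⊗[A] A'), (0 : C ⊗[A] A')) = 0 from rfl, LinearEquiv.map_zero, map_zero, map_zero]
      | tmul b a' =>
        have hsymm : e2.symm (b ⊗ₜ[A] a', 0) = ((b, 0) : B × C) ⊗ₜ[A] a' := by
          rw [LinearEquiv.symm_apply_eq]
          simp [he2]
        rw [hsymm]
        simp [hg, LinearMap.rTensor_tmul, hΦ]
      | add u v hu hv =>
        have : ((u + v, 0) : (B ⊗[A] A') × (C ⊗[A] A')) = (u, 0) + (v, 0) := by simp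
        rw [this, map_add, map_add, hu, hv, map_add]
    have lemB : ∀ y : C ⊗[A] A', (g.rTensor A') (e2.symm (0, y)) = - Ψ y := by
      intro y
      induction y using TensorProduct.induction_on with
      | zero =>
        rw [show ((0 : B ⊗[A] A'), (0 : C ⊗[A] A')) = 0 from rfl, map_zero, map_zero, map_zero,
          neg_zero]
      | tmul c a' =>
        have hsymm : e2.symm (0, c ⊗ₜ[A] a') = ((0, c) : B × C) ⊗ₜ[A] a' := by
          rw [LinearEquiv.symm_apply_eq]
          simp [he2]
        rw [hsymm]
        simp [hg, LinearMap.rTensor_tmul, hΨ, neg_tmul]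
      | add u v hu hv =>
        have : ((0, u + v) : (B ⊗[A] A') × (C ⊗[A] A')) = (0, u) + (0, v) := by simp
        rw [this, map_add, map_add, hu, hv, map_add, neg_add]
    have hgval : ∀ (x : B ⊗[A] A') (y : C ⊗[A] A'),
        (g.rTensor A') (e2.symm (x, y)) = Φ x - Ψ y := by
      intro x y
      have : ((x, y) : (B ⊗[A] A') × (C ⊗[A] A')) = (x, 0) + (0, y) := by simp
      rw [this, map_add, map_add, lemA, lemB, sub_eq_add_neg]
    intro x y hxy
    have h0 : (g.rTensor A') (e2.symm (x, y)) = 0 := by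
      rw [hgval, hxy, sub_self]
    obtain ⟨z, hz⟩ := (hexact' (e2.symm (x, y))).mp h0
    refine ⟨e1 z, ?_, ?_⟩
    · have : h (e1 z) = (x, y) := by
        simp only [hh, LinearMap.coe_comp, LinearEquiv.coe_coe, Function.comp_apply,
          LinearEquiv.symm_apply_apply, hz]
        exact e2.apply_symm_apply _
      have hv := hval (e1 z)
      rw [this] at hv
      exact ⟨congrArg Prod.fst hv.symm, congrArg Prod.snd hv.symm⟩
    · intro a' ⟨ha1, ha2⟩
      apply hhinj
      rw [hval, hval]
      have heq : h (e1 z) = (x, y) := by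
        simp only [hh, LinearMap.coe_comp, LinearEquiv.coe_coe, Function.comp_apply,
          LinearEquiv.symm_apply_apply, hz]
        exact e2.apply_symm_apply _
      have hv := hval (e1 z)
      rw [heq] at hv
      rw [ha1, ha2]
      exact hv
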